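/- Let Ω be homogeneous of degree zero on ℝⁿ, integrable on the unit sphere S^{n−1}, and have mean value zero on S^{n−1}. For t ∈ [1,2] and j ∈ ℤ define K_t^j(x) = 2^{−j} Ω(x)|x|^{−(n−1)} 𝟙_{2^{j−1}t < |x| ≤ 2^j t}(x). Then for every ξ ∈ ℝⁿ \ {0}, the Fourier transform satisfies |K̂_t^j(ξ)| ≤ C ‖Ω‖_{L¹(S^{n−1})} min{1, |2^j ξ|}, with C depending only on n. -/

import Mathlib

open MeasureTheory Metric Set
open scoped FourierTransform ENNReal
open Real Measure
open scoped NNReal RealInnerProductSpace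

lemma my_exp_sub_one (s : ℝ) : ‖Complex.exp (↑s * Complex.I) - 1‖ ≤ |s| := by
  have h1 : Complex.exp (↑s * Complex.I) - 1 = ↑(Real.cos s - 1) + ↑(Real.sin s) * Complex.I := by
    rw [Complex.exp_mul_I]; push_cast; ring
  rw [h1, Complex.norm_def, Complex.normSq_add_mul_I, ← Real.sqrt_sq_eq_abs]
  apply Real.sqrt_le_sqrt
  nlinarith [Real.one_sub_sq_div_two_le_cos (x := s), Real.sin_sq_add_cos_sq s]

lemma my_char_sub_one (θ : ℝ) : ‖(Real.fourierChar θ : ℂ) - 1‖ ≤ 2 * π * |θ| := by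
  rw [Real.fourierChar_apply]
  calc ‖Complex.exp (↑(2 * π * θ) * Complex.I) - 1‖ ≤ |2 * π * θ| := my_exp_sub_one _
    _ = 2 * π * |θ| := by
      rw [abs_mul, abs_of_nonneg (by positivity : (0:ℝ) ≤ 2 * π)]

/-- The dyadic piece `K_t^j(x) = 2^{−j} Ω(x)|x|^{−(n−1)} 𝟙_{2^{j−1}t<|x|≤2^j t}` of the
Marcinkiewicz kernel. -/
noncomputable def stmt3K (n : ℕ) (Ω : EuclideanSpace ℝ (Fin n) → ℝ) (t : ℝ) (j : ℤ) :
    EuclideanSpace ℝ (Fin n) → ℝ :=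
  fun x =>
    Set.indicator {y : EuclideanSpace ℝ (Fin n) |
        (2 : ℝ) ^ (j - 1) * t < ‖y‖ ∧ ‖y‖ ≤ (2 : ℝ) ^ j * t}
      (fun y => (2 : ℝ) ^ (-j) * Ω y / ‖y‖ ^ ((n : ℝ) - 1)) x

lemma key (n : ℕ) (hn : 2 ≤ n) (Ω : EuclideanSpace ℝ (Fin n) → ℝ)
    (hhom : ∀ (x : EuclideanSpace ℝ (Fin n)) (r : ℝ), 0 < r → Ω (r • x) = Ω x)
    (hΩ : Integrable (fun x : sphere (0 : EuclideanSpace ℝ (Fin n)) 1 => Ω ↑x)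
      (volume : Measure (EuclideanSpace ℝ (Fin n))).toSphere)
    (t : ℝ) (ht : t ∈ Set.Icc (1:ℝ) 2) (j : ℤ) :
    Integrable (stmt3K n Ω t j) volume ∧
    ∫ x, stmt3K n Ω t j x = (t / 2) *
      ∫ x : sphere (0 : EuclideanSpace ℝ (Fin n)) 1, Ω ↑x
        ∂(volume : Measure (EuclideanSpace ℝ (Fin n))).toSphere := by
  haveI : NeZero n := ⟨by omega⟩
  haveI : Nontrivial (EuclideanSpace ℝ (Fin n)) := by
    have h : Module.finrank ℝ (EuclideanSpace ℝ (Fin n)) = n := finrank_euclideanSpace_fin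
    exact Module.nontrivial_of_finrank_pos (R := ℝ) (by omega : 0 < Module.finrank ℝ
      (EuclideanSpace ℝ (Fin n)))
  set a : ℝ := (2:ℝ) ^ (j - 1) * t with ha_def
  set b : ℝ := (2:ℝ) ^ j * t with hb_def
  have ht1 : (1:ℝ) ≤ t := ht.1
  have ha : 0 < a := by positivity
  have hba : b - a = (2:ℝ) ^ (j-1) * t := by
    rw [ha_def, hb_def, ← sub_mul]
    congr 1
    rw [zpow_sub₀ (two_ne_zero)]
    ring
  have hab : a ≤ b := by nlinarith [zpow_pos (by norm_num : (0:ℝ) < 2) (j-1)]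
  set m : ℕ := n - 1 with hm_def
  have hmcast : ((m : ℝ)) = (n : ℝ) - 1 := by
    rw [hm_def]; push_cast [Nat.cast_sub (by omega : 1 ≤ n)]; ring
  set u : ℝ → ℝ := fun r => Set.indicator (Set.Ioc a b) (fun s => (2:ℝ) ^ (-j) / s ^ ((n:ℝ)-1)) r
    with hu_def
  set W : ℝ → ℝ := Set.indicator (Set.Ioc a b) (fun _ => (2:ℝ) ^ (-j)) with hW_def
  have hu_smul : ∀ r : ℝ, 0 < r → (r ^ m) • u r = W r := by
    intro r hr
    by_cases hmem : r ∈ Set.Ioc a b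
    · rw [hu_def, hW_def]
      simp only [Set.indicator_of_mem hmem, smul_eq_mul]
      rw [div_eq_mul_inv, ← mul_assoc, mul_comm (r^m), mul_assoc]
      have h2 : r ^ ((n:ℝ) - 1) = r ^ m := by
        rw [← hmcast, Real.rpow_natCast]
      rw [h2, mul_inv_cancel₀ (by positivity), mul_one]
    · rw [hu_def, hW_def]
      simp [Set.indicator_of_notMem hmem]
  have hWvol : Integrable W (volume.restrict (Set.Ioi (0:ℝ))) := by
    apply Integrable.integrableOn
    rw [hW_def, integrable_indicator_iff measurableSet_Ioc]
    refine integrableOn_const ?_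
    rw [Real.volume_Ioc]
    exact ENNReal.ofReal_ne_top
  have hWcomap : Integrable (W ∘ Subtype.val) (Measure.comap Subtype.val volume :
      Measure (Set.Ioi (0:ℝ))) := by
    rw [← map_comap_subtype_coe measurableSet_Ioi] at hWvol
    exact (MeasurableEmbedding.subtype_coe measurableSet_Ioi).integrable_map_iff.mp hWvol
  have hsub : Set.Ioc a b ∩ Set.Ioi (0:ℝ) = Set.Ioc a b :=
    Set.inter_eq_left.2 (fun x hx => lt_trans ha hx.1)
  have hWint : ∫ x in Set.Ioi (0:ℝ), W x = t / 2 := by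
    rw [hW_def, integral_indicator measurableSet_Ioc, Measure.restrict_restrict measurableSet_Ioc,
      hsub, setIntegral_const, Real.volume_real_Ioc_of_le hab,
      hba, smul_eq_mul]
    have hz : (2:ℝ)^(j-1) * 2^(-j) = 1/2 := by
      rw [← zpow_add₀ (two_ne_zero : (2:ℝ) ≠ 0)]
      have hje : j - 1 + -j = -1 := by ring
      rw [hje, zpow_neg_one]
      norm_num
    calc (2:ℝ)^(j-1) * t * 2^(-j) = ((2:ℝ)^(j-1) * 2^(-j)) * t := by ring
      _ = t / 2 := by rw [hz]; ring
  have hdens : Measurable (fun r : Set.Ioi (0:ℝ) => Real.toNNReal (r.1 ^ m)) :=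
    (measurable_subtype_coe.pow_const _).real_toNNReal
  have hmeas_eq : Measure.volumeIoiPow m = (Measure.comap Subtype.val volume :
      Measure (Set.Ioi (0:ℝ))).withDensity (fun r => (Real.toNNReal (r.1 ^ m) : ℝ≥0∞)) := rfl
  have hsmul_eq : (fun r : Set.Ioi (0:ℝ) => (Real.toNNReal (r.1 ^ m)) • u r.1)
      = W ∘ Subtype.val := by
    funext r
    rw [NNReal.smul_def, Real.coe_toNNReal _ (pow_nonneg (le_of_lt r.2) m)]
    exact hu_smul r.1 r.2
  have hg_int : Integrable (fun r : Set.Ioi (0:ℝ) => u r.1) (Measure.volumeIoiPow m) := by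
    rw [hmeas_eq, integrable_withDensity_iff_integrable_smul hdens]
    rw [hsmul_eq]
    exact hWcomap
  have hg_val : ∫ r : Set.Ioi (0:ℝ), u r.1 ∂(Measure.volumeIoiPow m) = t / 2 := by
    rw [hmeas_eq, integral_withDensity_eq_integral_smul hdens, hsmul_eq]
    exact (integral_subtype_comap measurableSet_Ioi W).trans hWint
  have hprod_int : Integrable
      (fun p : sphere (0 : EuclideanSpace ℝ (Fin n)) 1 × Set.Ioi (0:ℝ) => Ω ↑p.1 * u ↑p.2)
      ((volume : Measure (EuclideanSpace ℝ (Fin n))).toSphere.prod (Measure.volumeIoiPow m)) :=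
    hΩ.mul_prod hg_int
  have hprod_val : ∫ p : sphere (0 : EuclideanSpace ℝ (Fin n)) 1 × Set.Ioi (0:ℝ),
      Ω ↑p.1 * u ↑p.2
      ∂((volume : Measure (EuclideanSpace ℝ (Fin n))).toSphere.prod (Measure.volumeIoiPow m))
      = (∫ x : sphere (0 : EuclideanSpace ℝ (Fin n)) 1, Ω ↑x
          ∂(volume : Measure (EuclideanSpace ℝ (Fin n))).toSphere) * (t / 2) := by
    rw [← hg_val]
    exact integral_prod_mul (fun x : sphere (0 : EuclideanSpace ℝ (Fin n)) 1 => Ω ↑x)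
      (fun r : Set.Ioi (0:ℝ) => u ↑r)
  have hdim : Module.finrank ℝ (EuclideanSpace ℝ (Fin n)) - 1 = m := by
    rw [finrank_euclideanSpace_fin]
  have mp := (volume : Measure
    (EuclideanSpace ℝ (Fin n))).measurePreserving_homeomorphUnitSphereProd
  rw [hdim] at mp
  have hcomp : ((fun p : sphere (0 : EuclideanSpace ℝ (Fin n)) 1 × Set.Ioi (0:ℝ) =>
        Ω ↑p.1 * u ↑p.2) ∘ (homeomorphUnitSphereProd (EuclideanSpace ℝ (Fin n))))
      = (stmt3K n Ω t j) ∘ Subtype.val := by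
    funext x
    have hx : x.1 ≠ 0 := x.2
    have hnx : 0 < ‖x.1‖ := norm_pos_iff.2 hx
    have hΩx : Ω (‖x.1‖⁻¹ • x.1) = Ω x.1 := hhom x.1 _ (inv_pos.2 hnx)
    simp only [Function.comp_apply, homeomorphUnitSphereProd_apply_fst_coe,
      homeomorphUnitSphereProd_apply_snd_coe, hΩx]
    by_cases hmem : ‖x.1‖ ∈ Set.Ioc a b
    · rw [hu_def]
      simp only [Set.indicator_of_mem hmem]
      rw [stmt3K, Set.indicator_of_mem (by exact hmem :
        x.1 ∈ {y : EuclideanSpace ℝ (Fin n) | a < ‖y‖ ∧ ‖y‖ ≤ b})]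
      ring
    · rw [hu_def]
      simp only [Set.indicator_of_notMem hmem, mul_zero]
      rw [stmt3K, Set.indicator_of_notMem (by exact hmem :
        x.1 ∉ {y : EuclideanSpace ℝ (Fin n) | a < ‖y‖ ∧ ‖y‖ ≤ b})]
  have h1 : Integrable ((stmt3K n Ω t j) ∘ Subtype.val)
      ((volume : Measure (EuclideanSpace ℝ (Fin n))).comap Subtype.val :
        Measure ({(0 : EuclideanSpace ℝ (Fin n))}ᶜ : Set (EuclideanSpace ℝ (Fin n)))) := by
    rw [← hcomp]
    exact (mp.integrable_comp_emb (Homeomorph.measurableEmbedding _)).2 hprod_int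
  have h2 : Integrable (stmt3K n Ω t j) (volume : Measure (EuclideanSpace ℝ (Fin n))) := by
    have hrc : (volume : Measure (EuclideanSpace ℝ (Fin n))).restrict
        {(0 : EuclideanSpace ℝ (Fin n))}ᶜ = volume := restrict_compl_singleton _
    rw [← hrc,
      ← map_comap_subtype_coe (measurableSet_singleton (0 : EuclideanSpace ℝ (Fin n))).compl]
    exact (MeasurableEmbedding.subtype_coe
      (measurableSet_singleton (0 : EuclideanSpace ℝ (Fin n))).compl).integrable_map_iff.mpr h1
  refine ⟨h2, ?_⟩
  calc ∫ x, stmt3K n Ω t j x ∂(volume : Measure (EuclideanSpace ℝ (Fin n)))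
      = ∫ x, stmt3K n Ω t j x
          ∂((volume : Measure (EuclideanSpace ℝ (Fin n))).restrict
            {(0 : EuclideanSpace ℝ (Fin n))}ᶜ) := by
        rw [restrict_compl_singleton]
    _ = ∫ x : ({(0 : EuclideanSpace ℝ (Fin n))}ᶜ : Set (EuclideanSpace ℝ (Fin n))),
          stmt3K n Ω t j x.1
          ∂((volume : Measure (EuclideanSpace ℝ (Fin n))).comap Subtype.val) :=
        (integral_subtype_comap (measurableSet_singleton _).compl _).symm
    _ = ∫ x : ({(0 : EuclideanSpace ℝ (Fin n))}ᶜ : Set (EuclideanSpace ℝ (Fin n))),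
          (fun p : sphere (0 : EuclideanSpace ℝ (Fin n)) 1 × Set.Ioi (0:ℝ) =>
            Ω ↑p.1 * u ↑p.2) (homeomorphUnitSphereProd (EuclideanSpace ℝ (Fin n)) x)
          ∂((volume : Measure (EuclideanSpace ℝ (Fin n))).comap Subtype.val) := by
        exact integral_congr_ae (Filter.EventuallyEq.of_eq
          (funext fun x => (congrFun hcomp x).symm))
    _ = ∫ p : sphere (0 : EuclideanSpace ℝ (Fin n)) 1 × Set.Ioi (0:ℝ), Ω ↑p.1 * u ↑p.2
          ∂((volume : Measure (EuclideanSpace ℝ (Fin n))).toSphere.prod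
            (Measure.volumeIoiPow m)) :=
        mp.integral_comp (Homeomorph.measurableEmbedding _)
          (fun p : sphere (0 : EuclideanSpace ℝ (Fin n)) 1 × Set.Ioi (0:ℝ) => Ω ↑p.1 * u ↑p.2)
    _ = (∫ x : sphere (0 : EuclideanSpace ℝ (Fin n)) 1, Ω ↑x
          ∂(volume : Measure (EuclideanSpace ℝ (Fin n))).toSphere) * (t / 2) := hprod_val
    _ = (t / 2) * ∫ x : sphere (0 : EuclideanSpace ℝ (Fin n)) 1, Ω ↑x
          ∂(volume : Measure (EuclideanSpace ℝ (Fin n))).toSphere := mul_comm _ _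

/-- Fourier transform estimate for the dyadic pieces of the Marcinkiewicz kernel:
if `Ω` is homogeneous of degree zero, integrable on the sphere, with mean value zero,
then `|K̂_t^j(ξ)| ≤ C ‖Ω‖_{L¹(S^{n−1})} min{1, |2^j ξ|}`. -/
theorem stmt_3 (n : ℕ) (hn : 2 ≤ n) :
    ∃ C > (0 : ℝ), ∀ Ω : EuclideanSpace ℝ (Fin n) → ℝ,
      (∀ (x : EuclideanSpace ℝ (Fin n)) (r : ℝ), 0 < r → Ω (r • x) = Ω x) →
      Integrable (fun x : sphere (0 : EuclideanSpace ℝ (Fin n)) 1 => Ω ↑x)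
        (volume : Measure (EuclideanSpace ℝ (Fin n))).toSphere →
      (∫ x : sphere (0 : EuclideanSpace ℝ (Fin n)) 1, Ω ↑x
          ∂(volume : Measure (EuclideanSpace ℝ (Fin n))).toSphere) = 0 →
      ∀ t ∈ Set.Icc (1 : ℝ) 2, ∀ (j : ℤ) (ξ : EuclideanSpace ℝ (Fin n)), ξ ≠ 0 →
        ‖𝓕 (fun x => (stmt3K n Ω t j x : ℂ)) ξ‖ ≤
          C * (∫ x : sphere (0 : EuclideanSpace ℝ (Fin n)) 1, |Ω ↑x|
                ∂(volume : Measure (EuclideanSpace ℝ (Fin n))).toSphere) *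
            min 1 ‖(2 : ℝ) ^ j • ξ‖ := by
  refine ⟨4 * π, by positivity, ?_⟩
  intro Ω hhom hΩint hΩzero t ht j ξ hξ
  set I : ℝ := ∫ x : sphere (0 : EuclideanSpace ℝ (Fin n)) 1, |Ω ↑x|
    ∂(volume : Measure (EuclideanSpace ℝ (Fin n))).toSphere with hI_def
  have hI0 : 0 ≤ I := integral_nonneg (fun x => abs_nonneg _)
  have ht1 : (1:ℝ) ≤ t := ht.1
  have ht2 : t ≤ 2 := ht.2
  obtain ⟨hKint, hKval⟩ := key n hn Ω hhom hΩint t ht j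
  have hK0 : ∫ x, stmt3K n Ω t j x = 0 := by rw [hKval, hΩzero, mul_zero]
  have habs_hom : ∀ (x : EuclideanSpace ℝ (Fin n)) (r : ℝ), 0 < r →
      |Ω (r • x)| = |Ω x| := fun x r hr => by rw [hhom x r hr]
  obtain ⟨hAint, hAval⟩ := key n hn (fun x => |Ω x|) habs_hom hΩint.abs t ht j
  have habsK : ∀ x, ‖stmt3K n Ω t j x‖ = stmt3K n (fun y => |Ω y|) t j x := by
    intro x
    rw [Real.norm_eq_abs, stmt3K, stmt3K]
    by_cases hmem : x ∈ {y : EuclideanSpace ℝ (Fin n) |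
        (2 : ℝ) ^ (j - 1) * t < ‖y‖ ∧ ‖y‖ ≤ (2 : ℝ) ^ j * t}
    · rw [Set.indicator_of_mem hmem, Set.indicator_of_mem hmem, abs_div, abs_mul,
        abs_of_nonneg (le_of_lt (zpow_pos (by norm_num : (0:ℝ) < 2) (-j))),
        abs_of_nonneg (Real.rpow_nonneg (norm_nonneg x) _)]
    · rw [Set.indicator_of_notMem hmem, Set.indicator_of_notMem hmem, abs_zero]
  have hKnorm : ∫ x, ‖stmt3K n Ω t j x‖ = (t/2) * I := by
    rw [hI_def]
    rw [show (fun x => ‖stmt3K n Ω t j x‖) = stmt3K n (fun y => |Ω y|) t j from funext habsK]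
    exact hAval
  set f : EuclideanSpace ℝ (Fin n) → ℂ := fun x => (stmt3K n Ω t j x : ℂ) with hf_def
  have hfint : Integrable f volume := hKint.ofReal
  have hf0 : ∫ x, f x = 0 := by
    have h := integral_ofReal (f := stmt3K n Ω t j) (𝕜 := ℂ) (μ := volume)
    exact h.trans (by rw [hK0]; simp)
  have hfnorm : ∫ x, ‖f x‖ = (t/2) * I := by
    rw [hf_def]
    simp only [Complex.norm_real]
    exact hKnorm
  have hfnormle : ∫ x, ‖f x‖ ≤ I := by rw [hfnorm]; nlinarith
  set A : ℝ := ‖(2:ℝ) ^ j • ξ‖ with hA_def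
  have hA0 : 0 ≤ A := norm_nonneg _
  have hAeq : A = (2:ℝ)^j * ‖ξ‖ := by
    rw [hA_def, norm_smul, Real.norm_eq_abs,
      abs_of_pos (zpow_pos (by norm_num : (0:ℝ) < 2) j)]
  -- Bound 1
  have B1 : ‖𝓕 f ξ‖ ≤ ∫ x, ‖f x‖ :=
    VectorFourier.norm_fourierIntegral_le_integral_norm _ _ _ _ _
  -- Bound 2
  have hchar : Integrable (fun v : EuclideanSpace ℝ (Fin n) =>
      (Real.fourierChar (-⟪v, ξ⟫) : Circle) • f v) volume :=
    (Real.fourierIntegral_convergent_iff ξ).2 hfint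
  have hsplit : 𝓕 f ξ = ∫ v, ((Real.fourierChar (-⟪v, ξ⟫) : Circle) • f v - f v) := by
    rw [Real.fourier_eq, eq_comm, integral_sub hchar hfint, hf0, sub_zero]
  have hptwise : ∀ v : EuclideanSpace ℝ (Fin n),
      ‖(Real.fourierChar (-⟪v, ξ⟫) : Circle) • f v - f v‖ ≤ (4 * π * A) * ‖f v‖ := by
    intro v
    rcases eq_or_ne (f v) 0 with hv | hv
    · simp [hv]
    · have hKv : stmt3K n Ω t j v ≠ 0 := fun h => hv (by rw [hf_def]; simp [h])
      have hvmem : v ∈ {y : EuclideanSpace ℝ (Fin n) |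
          (2 : ℝ) ^ (j - 1) * t < ‖y‖ ∧ ‖y‖ ≤ (2 : ℝ) ^ j * t} := by
        by_contra hmem
        exact hKv (Set.indicator_of_notMem hmem _)
      have hnv : ‖v‖ ≤ (2:ℝ)^j * t := hvmem.2
      have h1 : (Real.fourierChar (-⟪v, ξ⟫) : Circle) • f v - f v
          = ((Real.fourierChar (-⟪v, ξ⟫) : ℂ) - 1) * f v := by
        rw [Circle.smul_def, smul_eq_mul]; ring
      rw [h1, norm_mul]
      have h2 : ‖(Real.fourierChar (-⟪v, ξ⟫) : ℂ) - 1‖ ≤ 4 * π * A := by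
        refine le_trans (my_char_sub_one _) ?_
        rw [abs_neg]
        have h3 : |⟪v, ξ⟫| ≤ ‖v‖ * ‖ξ‖ := abs_real_inner_le_norm v ξ
        have h4 : ‖v‖ * ‖ξ‖ ≤ ((2:ℝ)^j * t) * ‖ξ‖ :=
          mul_le_mul_of_nonneg_right hnv (norm_nonneg ξ)
        have h5 : (0:ℝ) < (2:ℝ)^j := zpow_pos (by norm_num) j
        have hπ : (0:ℝ) < π := Real.pi_pos
        rw [hAeq]
        nlinarith [norm_nonneg ξ, mul_le_mul_of_nonneg_right
          (mul_le_mul_of_nonneg_left ht2 (le_of_lt h5)) (norm_nonneg ξ)]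
      exact mul_le_mul_of_nonneg_right h2 (norm_nonneg _)
  have B2 : ‖𝓕 f ξ‖ ≤ (4 * π * A) * ((t/2) * I) := by
    rw [hsplit, ← hfnorm]
    refine le_trans (norm_integral_le_integral_norm _) ?_
    rw [← integral_const_mul]
    exact integral_mono_of_nonneg (Filter.Eventually.of_forall fun v => norm_nonneg _)
      (hfint.norm.const_mul _) (Filter.Eventually.of_forall hptwise)
  have hπ : (0:ℝ) < π := Real.pi_pos
  have hπ3 : (3:ℝ) < π := Real.pi_gt_three
  rcases le_total (1:ℝ) A with hA | hA
  · rw [min_eq_left hA]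
    have : ‖𝓕 f ξ‖ ≤ I := le_trans B1 hfnormle
    nlinarith
  · rw [min_eq_right hA]
    have h6 : t/2 * I ≤ I := by nlinarith
    calc ‖𝓕 f ξ‖ ≤ (4 * π * A) * ((t/2) * I) := B2
      _ ≤ (4 * π * A) * I := mul_le_mul_of_nonneg_left h6 (by positivity)
      _ = 4 * π * I * A := by ring
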